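/- Inner minimization over the dark-pool order in the HJB equation: for all real p > 1, β = 1/(p−1), γ > 0, v ≥ 0 and x ∈ ℝ, the convex function π ↦ γ|π|^p + v|x−π|^p on ℝ attains its global minimum at π* = v^β/(γ^β + v^β)·x, and the minimum value equals γ v |x|^p/(γ^β + v^β)^{1/β}. -/

import Mathlib

open Real Set

lemma convexOn_abs_rpow {p : ℝ} (hp : 1 ≤ p) : ConvexOn ℝ Set.univ (fun q : ℝ => |q| ^ p) := by
  have himg : (fun z : ℝ => |z|) '' (Set.univ : Set ℝ) = Set.Ici 0 := by
    ext y
    constructor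
    · rintro ⟨z, -, rfl⟩; exact abs_nonneg z
    · intro h; exact ⟨y, trivial, abs_of_nonneg h⟩
  have habs : ConvexOn ℝ (Set.univ : Set ℝ) (fun z : ℝ => |z|) := by
    exact convexOn_univ_norm (E := ℝ)
  have hg : ConvexOn ℝ ((fun z : ℝ => |z|) '' (Set.univ : Set ℝ)) (fun y : ℝ => y ^ p) := by
    rw [himg]; exact convexOn_rpow hp
  have hmono : MonotoneOn (fun y : ℝ => y ^ p) ((fun z : ℝ => |z|) '' (Set.univ : Set ℝ)) := by
    rw [himg]
    intro a ha b _ hab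
    exact Real.rpow_le_rpow ha hab (by linarith)
  exact hg.comp habs hmono

lemma convexOn_dark_full (p γ v x : ℝ) (hp : 1 ≤ p) (hγ : 0 ≤ γ) (hv : 0 ≤ v) :
    ConvexOn ℝ Set.univ (fun q : ℝ => γ * |q| ^ p + v * |x - q| ^ p) := by
  have h1 := convexOn_abs_rpow hp
  have h2 : ConvexOn ℝ Set.univ (fun q : ℝ => |x - q| ^ p) := by
    have := h1.comp_affineMap (AffineMap.const ℝ ℝ x - AffineMap.id ℝ ℝ)
    exact this
  exact (h1.smul hγ).add (h2.smul hv)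

open Real Set

lemma dark_value (p γ v x : ℝ) (hp : 1 < p) (hγ : 0 < γ) (hv : 0 < v) :
    γ * |v ^ (1 / (p - 1)) / (γ ^ (1 / (p - 1)) + v ^ (1 / (p - 1))) * x| ^ p
        + v * |x - v ^ (1 / (p - 1)) / (γ ^ (1 / (p - 1)) + v ^ (1 / (p - 1))) * x| ^ p
      = γ * v * |x| ^ p / ((γ ^ (1 / (p - 1)) + v ^ (1 / (p - 1))) ^ (p - 1)) := by
  have hp1 : 0 < p - 1 := by linarith
  set β := 1 / (p - 1) with hβdef
  set a := γ ^ β with hadef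
  set b := v ^ β with hbdef
  have ha : 0 < a := Real.rpow_pos_of_pos hγ β
  have hb : 0 < b := Real.rpow_pos_of_pos hv β
  have hs : 0 < a + b := by linarith
  have haγ : a ^ (p - 1) = γ := by
    rw [hadef, ← Real.rpow_mul hγ.le, hβdef, one_div_mul_cancel hp1.ne', Real.rpow_one]
  have hbv : b ^ (p - 1) = v := by
    rw [hbdef, ← Real.rpow_mul hv.le, hβdef, one_div_mul_cancel hp1.ne', Real.rpow_one]
  have hq : x - b / (a + b) * x = a / (a + b) * x := by field_simp; ring
  rw [hq]
  have h1 : |b / (a + b) * x| = b / (a + b) * |x| := by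
    rw [abs_mul, abs_of_nonneg (by positivity)]
  have h2 : |a / (a + b) * x| = a / (a + b) * |x| := by
    rw [abs_mul, abs_of_nonneg (by positivity)]
  rw [h1, h2, Real.mul_rpow (by positivity) (abs_nonneg x),
    Real.mul_rpow (by positivity) (abs_nonneg x),
    Real.div_rpow hb.le hs.le, Real.div_rpow ha.le hs.le]
  have hbp : b ^ p = v * b := by
    rw [show p = (p - 1) + 1 by ring, Real.rpow_add hb, Real.rpow_one, hbv]
  have hap : a ^ p = γ * a := by
    rw [show p = (p - 1) + 1 by ring, Real.rpow_add ha, Real.rpow_one, haγ]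
  have hsp : (a + b) ^ p = (a + b) ^ (p - 1) * (a + b) := by
    conv_lhs => rw [show p = (p - 1) + 1 by ring]
    rw [Real.rpow_add hs, Real.rpow_one]
  have hsppos : (0:ℝ) < (a + b) ^ (p - 1) := Real.rpow_pos_of_pos hs _
  rw [hbp, hap, hsp]
  field_simp
  ring

lemma dark_ineq (p γ v x q : ℝ) (hp : 1 < p) (hγ : 0 < γ) (hv : 0 < v) :
    γ * v * |x| ^ p / ((γ ^ (1 / (p - 1)) + v ^ (1 / (p - 1))) ^ (p - 1))
      ≤ γ * |q| ^ p + v * |x - q| ^ p := by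
  have hp1 : 0 < p - 1 := by linarith
  set β := 1 / (p - 1) with hβdef
  set a := γ ^ β with hadef
  set b := v ^ β with hbdef
  have ha : 0 < a := Real.rpow_pos_of_pos hγ β
  have hb : 0 < b := Real.rpow_pos_of_pos hv β
  have hs : 0 < a + b := by linarith
  have haγ : a ^ (p - 1) = γ := by
    rw [hadef, ← Real.rpow_mul hγ.le, hβdef, one_div_mul_cancel hp1.ne', Real.rpow_one]
  have hbv : b ^ (p - 1) = v := by
    rw [hbdef, ← Real.rpow_mul hv.le, hβdef, one_div_mul_cancel hp1.ne', Real.rpow_one]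
  set w1 := b / (a + b) with hw1def
  set w2 := a / (a + b) with hw2def
  have hw1 : 0 < w1 := by positivity
  have hw2 : 0 < w2 := by positivity
  have hww : w1 + w2 = 1 := by rw [hw1def, hw2def]; field_simp; ring
  set A := |q| with hAdef
  set B := |x - q| with hBdef
  have hA : 0 ≤ A := abs_nonneg q
  have hB : 0 ≤ B := abs_nonneg _
  have hconv := (convexOn_rpow hp.le).2 (x := A / w1) (y := B / w2)
    (Set.mem_Ici.2 (by positivity)) (Set.mem_Ici.2 (by positivity)) hw1.le hw2.le hww
  simp only [smul_eq_mul] at hconv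
  have hc1 : w1 * (A / w1) = A := by field_simp
  have hc2 : w2 * (B / w2) = B := by field_simp
  rw [hc1, hc2] at hconv
  have hAB : |x| ≤ A + B := by
    calc |x| = |q + (x - q)| := by ring_nf
    _ ≤ A + B := abs_add_le _ _
  have hxp : |x| ^ p ≤ (A + B) ^ p := Real.rpow_le_rpow (abs_nonneg x) hAB (by linarith)
  have hmain : |x| ^ p ≤ w1 * (A / w1) ^ p + w2 * (B / w2) ^ p := le_trans hxp hconv
  have hsp : (0:ℝ) < (a + b) ^ (p - 1) := Real.rpow_pos_of_pos hs _
  have hz1p : (A / w1) ^ p = A ^ p / w1 ^ p := Real.div_rpow hA hw1.le p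
  have hz2p : (B / w2) ^ p = B ^ p / w2 ^ p := Real.div_rpow hB hw2.le p
  have hkey1 : w1 ^ p * (a + b) ^ (p - 1) = v * w1 := by
    calc w1 ^ p * (a + b) ^ (p - 1)
        = (w1 ^ (p - 1) * (a + b) ^ (p - 1)) * w1 := by
          conv_lhs => rw [show p = (p - 1) + 1 by ring]
          rw [Real.rpow_add hw1, Real.rpow_one]; ring
      _ = (w1 * (a + b)) ^ (p - 1) * w1 := by rw [← Real.mul_rpow hw1.le hs.le]
      _ = v * w1 := by rw [hw1def, div_mul_cancel₀ b hs.ne', hbv]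
  have hkey2 : w2 ^ p * (a + b) ^ (p - 1) = γ * w2 := by
    calc w2 ^ p * (a + b) ^ (p - 1)
        = (w2 ^ (p - 1) * (a + b) ^ (p - 1)) * w2 := by
          conv_lhs => rw [show p = (p - 1) + 1 by ring]
          rw [Real.rpow_add hw2, Real.rpow_one]; ring
      _ = (w2 * (a + b)) ^ (p - 1) * w2 := by rw [← Real.mul_rpow hw2.le hs.le]
      _ = γ * w2 := by rw [hw2def, div_mul_cancel₀ a hs.ne', haγ]
  have e1 : γ * v * (w1 * (A / w1) ^ p) / (a + b) ^ (p - 1) = γ * A ^ p := by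
    have h5 : v * w1 / (w1 ^ p * (a + b) ^ (p - 1)) = 1 := by
      rw [← hkey1]; exact div_self (by positivity)
    calc γ * v * (w1 * (A / w1) ^ p) / (a + b) ^ (p - 1)
        = γ * A ^ p * (v * w1 / (w1 ^ p * (a + b) ^ (p - 1))) := by rw [hz1p]; ring
      _ = γ * A ^ p := by rw [h5, mul_one]
  have e2 : γ * v * (w2 * (B / w2) ^ p) / (a + b) ^ (p - 1) = v * B ^ p := by
    have h5 : γ * w2 / (w2 ^ p * (a + b) ^ (p - 1)) = 1 := by
      rw [← hkey2]; exact div_self (by positivity)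
    calc γ * v * (w2 * (B / w2) ^ p) / (a + b) ^ (p - 1)
        = v * B ^ p * (γ * w2 / (w2 ^ p * (a + b) ^ (p - 1))) := by rw [hz2p]; ring
      _ = v * B ^ p := by rw [h5, mul_one]
  calc γ * v * |x| ^ p / (a + b) ^ (p - 1)
      ≤ γ * v * (w1 * (A / w1) ^ p + w2 * (B / w2) ^ p) / (a + b) ^ (p - 1) := by gcongr
    _ = γ * v * (w1 * (A / w1) ^ p) / (a + b) ^ (p - 1)
        + γ * v * (w2 * (B / w2) ^ p) / (a + b) ^ (p - 1) := by ring
    _ = γ * A ^ p + v * B ^ p := by rw [e1, e2]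


/-- inner minimization over the dark-pool order: for `p > 1`,
`β = 1/(p−1)` (so `1/β = p−1`), `γ > 0`, `v ≥ 0`, `x ∈ ℝ`, the convex function
`q ↦ γ|q|^p + v|x−q|^p` attains its global minimum at `q* = v^β/(γ^β + v^β)·x`, with
minimum value `γ v |x|^p/(γ^β + v^β)^{1/β}`. -/
theorem inner_minimization_dark_pool (p γ v x : ℝ) (hp : 1 < p) (hγ : 0 < γ)
    (hv : 0 ≤ v) :
    ConvexOn ℝ Set.univ (fun q : ℝ => γ * |q| ^ p + v * |x - q| ^ p) ∧
    (∀ q : ℝ,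
      γ * |v ^ (1 / (p - 1)) / (γ ^ (1 / (p - 1)) + v ^ (1 / (p - 1))) * x| ^ p
          + v * |x - v ^ (1 / (p - 1)) / (γ ^ (1 / (p - 1)) + v ^ (1 / (p - 1))) * x| ^ p
        ≤ γ * |q| ^ p + v * |x - q| ^ p) ∧
    γ * |v ^ (1 / (p - 1)) / (γ ^ (1 / (p - 1)) + v ^ (1 / (p - 1))) * x| ^ p
        + v * |x - v ^ (1 / (p - 1)) / (γ ^ (1 / (p - 1)) + v ^ (1 / (p - 1))) * x| ^ p
      = γ * v * |x| ^ p / ((γ ^ (1 / (p - 1)) + v ^ (1 / (p - 1))) ^ (p - 1)) := by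
  have hp1 : 0 < p - 1 := by linarith
  refine ⟨convexOn_dark_full p γ v x hp.le hγ.le hv, ?_, ?_⟩
  · intro q
    rcases hv.eq_or_lt with hv0 | hv0
    · subst hv0
      have h0 : (0:ℝ) ^ (1 / (p - 1)) = 0 := Real.zero_rpow (by positivity : (0:ℝ) < 1/(p-1)).ne'
      have hpne : p ≠ 0 := by linarith
      rw [h0]
      simp only [zero_div, add_zero, zero_mul, abs_zero, Real.zero_rpow hpne, mul_zero,
        zero_add, sub_zero]
      positivity
    · rw [dark_value p γ v x hp hγ hv0]
      exact dark_ineq p γ v x q hp hγ hv0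
  · rcases hv.eq_or_lt with hv0 | hv0
    · subst hv0
      have h0 : (0:ℝ) ^ (1 / (p - 1)) = 0 := Real.zero_rpow (by positivity : (0:ℝ) < 1/(p-1)).ne'
      have hpne : p ≠ 0 := by linarith
      rw [h0]
      simp only [zero_div, add_zero, zero_mul, abs_zero, Real.zero_rpow hpne, mul_zero,
        zero_add, sub_zero]
    · exact dark_value p γ v x hp hγ hv0
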